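/- Let 𝒜 = {A₁, A₂, A₃, A₄} be a 4-cover of ℝ such that A₂ is of type F_σ in the euclidean topology on ℝ (a countable union of euclidean-closed sets) and A₃ ∪ A₄ is countable. Then the hybrid space H₄(𝒜) is metrizable. -/

import Mathlib

open Set

/-- The Sorgenfrey topology on ℝ (generated by the intervals `[a, b)`). -/
def sorgenfreyTop : TopologicalSpace ℝ :=
  TopologicalSpace.generateFrom {S : Set ℝ | ∃ a b : ℝ, S = Set.Ico a b}

/-- The "left" Sorgenfrey topology on ℝ (generated by the intervals `(a, b]`). -/
def sorgenfreyLeftTop : TopologicalSpace ℝ :=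
  TopologicalSpace.generateFrom {S : Set ℝ | ∃ a b : ℝ, S = Set.Ioc a b}

/-- `A₁, A₂, A₃, A₄` form a 4-cover of ℝ: pairwise disjoint with union ℝ. -/
def Is4Cover (A₁ A₂ A₃ A₄ : Set ℝ) : Prop :=
  A₁ ∪ A₂ ∪ A₃ ∪ A₄ = Set.univ ∧
  Disjoint A₁ A₂ ∧ Disjoint A₁ A₃ ∧ Disjoint A₁ A₄ ∧
  Disjoint A₂ A₃ ∧ Disjoint A₂ A₄ ∧ Disjoint A₃ A₄

/-- The hybrid topology determined by a 4-cover: points of `A₁` have the usual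
open intervals as a local base, points of `A₂` are isolated, points of `A₃`
have a local base of sets `[x, x+ε)`, and points of `A₄` of sets `(x-ε, x]`. -/
def hybridTop (A₁ A₂ A₃ A₄ : Set ℝ) : TopologicalSpace ℝ :=
  TopologicalSpace.generateFrom
    ({S : Set ℝ | ∃ x ∈ A₁, ∃ ε : ℝ, 0 < ε ∧ S = Set.Ioo (x - ε) (x + ε)} ∪
     {S : Set ℝ | ∃ x ∈ A₂, S = {x}} ∪
     {S : Set ℝ | ∃ x ∈ A₃, ∃ ε : ℝ, 0 < ε ∧ S = Set.Ico x (x + ε)} ∪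
     {S : Set ℝ | ∃ x ∈ A₄, ∃ ε : ℝ, 0 < ε ∧ S = Set.Ioc (x - ε) x})

/-- A quasi-metric: nonnegative, vanishing exactly on the diagonal,
satisfying the triangle inequality. -/
def IsQuasiMetric {X : Type*} (ρ : X → X → ℝ) : Prop :=
  (∀ x y, 0 ≤ ρ x y) ∧ (∀ x y, ρ x y = 0 ↔ x = y) ∧
  (∀ x y z, ρ x y ≤ ρ x z + ρ z y)

/-- A non-archimedean quasi-metric. -/
def IsNAQuasiMetric {X : Type*} (ρ : X → X → ℝ) : Prop :=
  IsQuasiMetric ρ ∧ ∀ x y z, ρ x y ≤ max (ρ x z) (ρ z y)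

/-- The topology induced by a quasi-metric: the balls `B_ρ(x, r)` form a base. -/
def quasiMetricTop {X : Type*} (ρ : X → X → ℝ) : TopologicalSpace X :=
  TopologicalSpace.generateFrom
    {B : Set X | ∃ x : X, ∃ r : ℝ, 0 < r ∧ B = {y : X | ρ x y < r}}

/-- A topology is quasi-metrizable if it is induced by some quasi-metric. -/
def QuasiMetrizableTop {X : Type*} (t : TopologicalSpace X) : Prop :=
  ∃ ρ : X → X → ℝ, IsQuasiMetric ρ ∧ t = quasiMetricTop ρ

/-- A topology is non-archimedeanly quasi-metrizable if it is induced by some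
non-archimedean quasi-metric. -/
def NAQuasiMetrizableTop {X : Type*} (t : TopologicalSpace X) : Prop :=
  ∃ ρ : X → X → ℝ, IsNAQuasiMetric ρ ∧ t = quasiMetricTop ρ

open Topology

/-! ### Auxiliary: a discrete metric space of cardinality continuum plus a point -/

structure DR : Type where
  val : Option ℝ

open scoped Classical in
noncomputable instance : MetricSpace DR where
  dist x y := if x = y then 0 else 1
  dist_self x := by simp
  dist_comm x y := by
    by_cases h : x = y
    · simp [h]
    · have h' : ¬ y = x := fun e => h e.symm
      show (if x = y then (0:ℝ) else 1) = (if y = x then (0:ℝ) else 1)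
      rw [if_neg h, if_neg h']
  dist_triangle x y z := by
    show (if x = z then (0:ℝ) else 1) ≤ (if x = y then (0:ℝ) else 1) + (if y = z then (0:ℝ) else 1)
    split_ifs <;> try norm_num
    all_goals simp_all
  eq_of_dist_eq_zero := by
    intro x y h
    by_contra hne
    have h' : (if x = y then (0:ℝ) else 1) = 0 := h
    rw [if_neg hne] at h'
    norm_num at h'

open scoped Classical in
theorem DR.dist_def (x y : DR) : dist x y = if x = y then 0 else 1 := rfl

instance : DiscreteTopology DR := by
  apply discreteTopology_iff_isOpen_singleton.2
  intro a
  have h : ({a} : Set DR) = Metric.ball a 1 := by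
    ext y
    simp only [mem_singleton_iff, Metric.mem_ball]
    constructor
    · rintro rfl
      rw [dist_self]; norm_num
    · intro h
      by_contra hne
      rw [DR.dist_def, if_neg hne] at h
      exact lt_irrefl _ h
  rw [h]; exact Metric.isOpen_ball

/-! ### Openness criteria for the hybrid topology -/

theorem hybrid_isOpen_of {A₁ A₂ A₃ A₄ : Set ℝ} (hcov : A₁ ∪ A₂ ∪ A₃ ∪ A₄ = univ) {U : Set ℝ}
    (H1 : ∀ x ∈ U, x ∈ A₁ → ∃ ε : ℝ, 0 < ε ∧ Ioo (x - ε) (x + ε) ⊆ U)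
    (H3 : ∀ x ∈ U, x ∈ A₃ → ∃ ε : ℝ, 0 < ε ∧ Ico x (x + ε) ⊆ U)
    (H4 : ∀ x ∈ U, x ∈ A₄ → ∃ ε : ℝ, 0 < ε ∧ Ioc (x - ε) x ⊆ U) :
    IsOpen[hybridTop A₁ A₂ A₃ A₄] U := by
  letI := hybridTop A₁ A₂ A₃ A₄
  rw [isOpen_iff_forall_mem_open]
  intro x hx
  have hx4 : x ∈ A₁ ∪ A₂ ∪ A₃ ∪ A₄ := by rw [hcov]; exact mem_univ x
  rcases hx4 with ((h1 | h2) | h3) | h4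
  · obtain ⟨ε, hε, hsub⟩ := H1 x hx h1
    refine ⟨Ioo (x - ε) (x + ε), hsub, ?_, by constructor <;> linarith⟩
    exact TopologicalSpace.isOpen_generateFrom_of_mem
      (mem_union_left _ (mem_union_left _ (mem_union_left _ ⟨x, h1, ε, hε, rfl⟩)))
  · refine ⟨{x}, singleton_subset_iff.2 hx, ?_, rfl⟩
    exact TopologicalSpace.isOpen_generateFrom_of_mem
      (mem_union_left _ (mem_union_left _ (mem_union_right _ ⟨x, h2, rfl⟩)))
  · obtain ⟨ε, hε, hsub⟩ := H3 x hx h3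
    refine ⟨Ico x (x + ε), hsub, ?_, le_refl x, by linarith⟩
    exact TopologicalSpace.isOpen_generateFrom_of_mem
      (mem_union_left _ (mem_union_right _ ⟨x, h3, ε, hε, rfl⟩))
  · obtain ⟨ε, hε, hsub⟩ := H4 x hx h4
    refine ⟨Ioc (x - ε) x, hsub, ?_, by linarith, le_refl x⟩
    exact TopologicalSpace.isOpen_generateFrom_of_mem
      (mem_union_right _ ⟨x, h4, ε, hε, rfl⟩)

theorem euclid_isOpen_hybrid {A₁ A₂ A₃ A₄ : Set ℝ} (hcov : A₁ ∪ A₂ ∪ A₃ ∪ A₄ = univ)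
    {U : Set ℝ} (hU : IsOpen U) : IsOpen[hybridTop A₁ A₂ A₃ A₄] U := by
  have hb : ∀ x ∈ U, ∃ ε : ℝ, 0 < ε ∧ Ioo (x - ε) (x + ε) ⊆ U := by
    intro x hx
    obtain ⟨ε, hε, h⟩ := Metric.isOpen_iff.1 hU x hx
    exact ⟨ε, hε, by rw [← Real.ball_eq_Ioo]; exact h⟩
  apply hybrid_isOpen_of hcov
  · intro x hx _; exact hb x hx
  · intro x hx _
    obtain ⟨ε, hε, h⟩ := hb x hx
    exact ⟨ε, hε, fun y hy => h ⟨by linarith [hy.1], hy.2⟩⟩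
  · intro x hx _
    obtain ⟨ε, hε, h⟩ := hb x hx
    exact ⟨ε, hε, fun y hy => h ⟨hy.1, by linarith [hy.2]⟩⟩

theorem subsetA2_isOpen_hybrid {A₁ A₂ A₃ A₄ : Set ℝ} {V : Set ℝ} (hV : V ⊆ A₂) :
    IsOpen[hybridTop A₁ A₂ A₃ A₄] V := by
  letI := hybridTop A₁ A₂ A₃ A₄
  have hV' : V = ⋃ a ∈ V, {a} := by simp
  rw [hV']
  refine isOpen_biUnion fun a ha => ?_
  exact TopologicalSpace.isOpen_generateFrom_of_mem
    (mem_union_left _ (mem_union_left _ (mem_union_right _ ⟨a, hV ha, rfl⟩)))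

theorem hybrid_Iio {A₁ A₂ A₃ A₄ : Set ℝ} (hcov : A₁ ∪ A₂ ∪ A₃ ∪ A₄ = univ) (d : ℝ) :
    IsOpen[hybridTop A₁ A₂ A₃ A₄] (Iio d) := by
  apply hybrid_isOpen_of hcov
  · intro x hx _
    exact ⟨d - x, by simp only [mem_Iio] at hx; linarith,
      fun y hy => by simp only [mem_Iio]; have := hy.2; simp only [mem_Iio] at hx; linarith⟩
  · intro x hx _
    exact ⟨d - x, by simp only [mem_Iio] at hx; linarith,
      fun y hy => by simp only [mem_Iio]; have := hy.2; linarith⟩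
  · intro x hx _
    simp only [mem_Iio] at hx
    exact ⟨1, one_pos, fun y hy => by simp only [mem_Iio]; have := hy.2; linarith⟩

theorem hybrid_Ioi {A₁ A₂ A₃ A₄ : Set ℝ} (hcov : A₁ ∪ A₂ ∪ A₃ ∪ A₄ = univ) (d : ℝ) :
    IsOpen[hybridTop A₁ A₂ A₃ A₄] (Ioi d) := by
  apply hybrid_isOpen_of hcov
  · intro x hx _
    simp only [mem_Ioi] at hx
    exact ⟨x - d, by linarith, fun y hy => by simp only [mem_Ioi]; have := hy.1; linarith⟩
  · intro x hx _
    simp only [mem_Ioi] at hx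
    exact ⟨1, one_pos, fun y hy => by simp only [mem_Ioi]; have := hy.1; linarith⟩
  · intro x hx _
    simp only [mem_Ioi] at hx
    exact ⟨x - d, by linarith, fun y hy => by simp only [mem_Ioi]; have := hy.1; linarith⟩

theorem hybrid_Ici {A₁ A₂ A₃ A₄ : Set ℝ} (hcov : A₁ ∪ A₂ ∪ A₃ ∪ A₄ = univ)
    {d : ℝ} (hd : d ∈ A₃) (d13 : Disjoint A₁ A₃) (d34 : Disjoint A₃ A₄) :
    IsOpen[hybridTop A₁ A₂ A₃ A₄] (Ici d) := by
  apply hybrid_isOpen_of hcov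
  · intro x hx h1
    simp only [mem_Ici] at hx
    have hne : x ≠ d := fun e => (Set.disjoint_left.1 d13) h1 (e ▸ hd)
    have hlt : d < x := lt_of_le_of_ne hx (Ne.symm hne)
    exact ⟨x - d, by linarith, fun y hy => by simp only [mem_Ici]; have := hy.1; linarith⟩
  · intro x hx _
    simp only [mem_Ici] at hx
    exact ⟨1, one_pos, fun y hy => by simp only [mem_Ici]; have := hy.1; linarith⟩
  · intro x hx h4
    simp only [mem_Ici] at hx
    have hne : x ≠ d := fun e => (Set.disjoint_left.1 d34) (e ▸ hd) h4
    have hlt : d < x := lt_of_le_of_ne hx (Ne.symm hne)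
    exact ⟨x - d, by linarith, fun y hy => by simp only [mem_Ici]; have := hy.1; linarith⟩

theorem hybrid_Iic {A₁ A₂ A₃ A₄ : Set ℝ} (hcov : A₁ ∪ A₂ ∪ A₃ ∪ A₄ = univ)
    {d : ℝ} (hd : d ∈ A₄) (d14 : Disjoint A₁ A₄) (d34 : Disjoint A₃ A₄) :
    IsOpen[hybridTop A₁ A₂ A₃ A₄] (Iic d) := by
  apply hybrid_isOpen_of hcov
  · intro x hx h1
    simp only [mem_Iic] at hx
    have hne : x ≠ d := fun e => (Set.disjoint_left.1 d14) h1 (e ▸ hd)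
    have hlt : x < d := lt_of_le_of_ne hx hne
    exact ⟨d - x, by linarith, fun y hy => by simp only [mem_Iic]; have := hy.2; linarith⟩
  · intro x hx h3
    simp only [mem_Iic] at hx
    have hne : x ≠ d := fun e => (Set.disjoint_left.1 d34) h3 (e ▸ hd)
    have hlt : x < d := lt_of_le_of_ne hx hne
    exact ⟨d - x, by linarith, fun y hy => by simp only [mem_Iic]; have := hy.2; linarith⟩
  · intro x hx _
    simp only [mem_Iic] at hx
    exact ⟨1, one_pos, fun y hy => by simp only [mem_Iic]; have := hy.2; linarith⟩

/-! ### Coordinate functions -/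

open scoped Classical in
noncomputable def fDR (C : ℕ → Set ℝ) (n : ℕ) (x : ℝ) : DR :=
  if x ∈ C n then ⟨some x⟩ else ⟨none⟩

open scoped Classical in
noncomputable def gDR (A₃ A₄ : Set ℝ) (d : ℝ) (x : ℝ) : DR :=
  if d ∈ A₃ then (if d ≤ x then ⟨some 0⟩ else ⟨none⟩)
  else if d ∈ A₄ then (if d < x then ⟨some 0⟩ else ⟨none⟩)
  else ⟨none⟩

theorem fDR_preimage_open {A₁ A₂ A₃ A₄ : Set ℝ} (hcov : A₁ ∪ A₂ ∪ A₃ ∪ A₄ = univ)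
    {C : ℕ → Set ℝ} (hC : ∀ n, IsClosed (C n)) (hsub : ∀ n, C n ⊆ A₂) (n : ℕ) (S : Set DR) :
    IsOpen[hybridTop A₁ A₂ A₃ A₄] (fDR C n ⁻¹' S) := by
  classical
  letI := hybridTop A₁ A₂ A₃ A₄
  have hset : fDR C n ⁻¹' S =
      {x | x ∈ C n ∧ (⟨some x⟩ : DR) ∈ S} ∪ {x | x ∉ C n ∧ (⟨none⟩ : DR) ∈ S} := by
    ext x
    by_cases hx : x ∈ C n <;> simp [fDR, hx]
  rw [hset]
  apply IsOpen.union
  · exact subsetA2_isOpen_hybrid (fun x hx => hsub n hx.1)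
  · by_cases hn : (⟨none⟩ : DR) ∈ S
    · have h2 : {x : ℝ | x ∉ C n ∧ (⟨none⟩ : DR) ∈ S} = (C n)ᶜ := by ext x; simp [hn]
      rw [h2]
      exact euclid_isOpen_hybrid hcov (hC n).isOpen_compl
    · have h2 : {x : ℝ | x ∉ C n ∧ (⟨none⟩ : DR) ∈ S} = ∅ := by ext x; simp [hn]
      rw [h2]; exact isOpen_empty

theorem gDR_preimage_open {A₁ A₂ A₃ A₄ : Set ℝ} (hcov : A₁ ∪ A₂ ∪ A₃ ∪ A₄ = univ)
    (d13 : Disjoint A₁ A₃) (d14 : Disjoint A₁ A₄) (d34 : Disjoint A₃ A₄)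
    (d : ℝ) (S : Set DR) :
    IsOpen[hybridTop A₁ A₂ A₃ A₄] (gDR A₃ A₄ d ⁻¹' S) := by
  classical
  letI := hybridTop A₁ A₂ A₃ A₄
  by_cases h3 : d ∈ A₃
  · have hset : gDR A₃ A₄ d ⁻¹' S =
        (if (⟨some 0⟩ : DR) ∈ S then Ici d else ∅) ∪
        (if (⟨none⟩ : DR) ∈ S then Iio d else ∅) := by
      ext x
      by_cases hd : d ≤ x <;>
        by_cases hs : (⟨some 0⟩ : DR) ∈ S <;>
        by_cases hn : (⟨none⟩ : DR) ∈ S <;>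
        simp [gDR, h3, hd, hs, hn, mem_Ici, mem_Iio, not_le.1, lt_of_not_ge] <;>
        first
          | exact hd
          | exact not_le.1 hd
          | (intro h; exact absurd h.le hd)
          | (intro h; exact hd h.le)
          | skip
    rw [hset]
    apply IsOpen.union
    · split
      · exact hybrid_Ici hcov h3 d13 d34
      · exact isOpen_empty
    · split
      · exact hybrid_Iio hcov d
      · exact isOpen_empty
  · by_cases h4 : d ∈ A₄
    · have hset : gDR A₃ A₄ d ⁻¹' S =
          (if (⟨some 0⟩ : DR) ∈ S then Ioi d else ∅) ∪
          (if (⟨none⟩ : DR) ∈ S then Iic d else ∅) := by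
        ext x
        by_cases hd : d < x <;>
          by_cases hs : (⟨some 0⟩ : DR) ∈ S <;>
          by_cases hn : (⟨none⟩ : DR) ∈ S <;>
          simp [gDR, h3, h4, hd, hs, hn, mem_Ioi, mem_Iic] <;>
          first
            | exact hd
            | exact not_lt.1 hd
            | (intro h; exact absurd h hd)
            | (intro h; exact absurd hd (not_lt.2 h))
            | skip
      rw [hset]
      apply IsOpen.union
      · split
        · exact hybrid_Ioi hcov d
        · exact isOpen_empty
      · split
        · exact hybrid_Iic hcov h4 d14 d34
        · exact isOpen_empty
    · have hset : gDR A₃ A₄ d ⁻¹' S =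
          (if (⟨none⟩ : DR) ∈ S then univ else ∅) := by
        ext x
        by_cases hn : (⟨none⟩ : DR) ∈ S <;> simp [gDR, h3, h4, hn]
      rw [hset]
      split
      · exact isOpen_univ
      · exact isOpen_empty

theorem fDR_preimage_singleton {C : ℕ → Set ℝ} {n : ℕ} {a : ℝ} (ha : a ∈ C n) :
    fDR C n ⁻¹' {(⟨some a⟩ : DR)} = {a} := by
  classical
  ext x
  by_cases hx : x ∈ C n
  · simp [fDR, hx]
  · simp [fDR, hx]
    rintro rfl; exact absurd ha hx

theorem gDR_Ici {A₃ A₄ : Set ℝ} {d : ℝ} (h3 : d ∈ A₃) :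
    gDR A₃ A₄ d ⁻¹' {(⟨some 0⟩ : DR)} = Ici d := by
  classical
  ext x
  by_cases hd : d ≤ x
  · simp [gDR, h3, hd]
  · simp [gDR, h3, hd]

theorem gDR_Iic {A₃ A₄ : Set ℝ} {d : ℝ} (h4 : d ∈ A₄) (h3 : d ∉ A₃) :
    gDR A₃ A₄ d ⁻¹' {(⟨none⟩ : DR)} = Iic d := by
  classical
  ext x
  by_cases hd : d < x
  · simp [gDR, h3, h4, hd]
  · simp [gDR, h3, h4, hd]
    exact not_lt.1 hd

/-- **Proposition 2.13.** If `A₂` is euclidean-`F_σ` and `A₃ ∪ A₄` is countable,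
then `H₄(𝒜)` is metrizable. -/
theorem hybrid_metrizable_of_Fsigma_countable
    (A₁ A₂ A₃ A₄ : Set ℝ) (hcov : Is4Cover A₁ A₂ A₃ A₄)
    (h2 : ∃ C : ℕ → Set ℝ, (∀ n, IsClosed (C n)) ∧ A₂ = ⋃ n, C n)
    (h34 : (A₃ ∪ A₄).Countable) :
    ∃ m : MetricSpace ℝ, m.toUniformSpace.toTopologicalSpace = hybridTop A₁ A₂ A₃ A₄ := by
  classical
  obtain ⟨hun, d12, d13, d14, d23, d24, d34⟩ := hcov
  obtain ⟨C, hC, hA2⟩ := h2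
  have hsub : ∀ n, C n ⊆ A₂ := fun n x hx => by rw [hA2]; exact mem_iUnion.2 ⟨n, hx⟩
  obtain ⟨u, hu⟩ := (h34.insert 0).exists_eq_range (insert_nonempty _ _)
  set ψ : ℝ → ℝ × (ℕ → DR) × (ℕ → DR) :=
    fun x => (x, fun n => fDR C n x, fun k => gDR A₃ A₄ (u k) x) with hψ
  have hinj : Function.Injective ψ := fun a b hab => congrArg Prod.fst hab
  haveI : TopologicalSpace.MetrizableSpace (ℕ → DR) :=
    inferInstance
  obtain ⟨m, hm⟩ : ∃ m : MetricSpace (ℝ × (ℕ → DR) × (ℕ → DR)),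
      m.toUniformSpace.toTopologicalSpace =
        (inferInstance : TopologicalSpace (ℝ × (ℕ → DR) × (ℕ → DR))) :=
    ⟨TopologicalSpace.metrizableSpaceMetric _, rfl⟩
  have key : hybridTop A₁ A₂ A₃ A₄ =
      TopologicalSpace.induced ψ
        (inferInstance : TopologicalSpace (ℝ × (ℕ → DR) × (ℕ → DR))) := by
    apply le_antisymm
    · rw [← continuous_iff_le_induced, hψ,
        @continuous_prodMk ℝ ℝ ((ℕ → DR) × (ℕ → DR)) (hybridTop A₁ A₂ A₃ A₄) _ _]
      constructor
      · exact continuous_def.mpr fun s hs => euclid_isOpen_hybrid hun hs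
      · rw [@continuous_prodMk ℝ (ℕ → DR) (ℕ → DR) (hybridTop A₁ A₂ A₃ A₄) _ _]
        constructor
        · rw [@continuous_pi_iff ℝ ℕ (fun _ => DR) (hybridTop A₁ A₂ A₃ A₄) _]
          intro n
          exact continuous_def.mpr fun s _ => fDR_preimage_open hun hC hsub n s
        · rw [@continuous_pi_iff ℝ ℕ (fun _ => DR) (hybridTop A₁ A₂ A₃ A₄) _]
          intro k
          exact continuous_def.mpr fun s _ => gDR_preimage_open hun d13 d14 d34 (u k) s
    · apply le_generateFrom
      rintro s hs
      simp only [Set.mem_union, Set.mem_setOf_eq] at hs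
      rcases hs with ((⟨x, hx1, ε, hε, rfl⟩ | ⟨x, hx2, rfl⟩) | ⟨x, hx3, ε, hε, rfl⟩) |
        ⟨x, hx4, ε, hε, rfl⟩
      · refine isOpen_induced_iff.mpr
          ⟨Ioo (x - ε) (x + ε) ×ˢ (univ : Set ((ℕ → DR) × (ℕ → DR))),
            isOpen_Ioo.prod isOpen_univ, ?_⟩
        ext y; simp [hψ]
      · rw [hA2] at hx2
        obtain ⟨n, hn⟩ := mem_iUnion.1 hx2
        refine isOpen_induced_iff.mpr
          ⟨(univ : Set ℝ) ×ˢ (((fun v : ℕ → DR => v n) ⁻¹' {(⟨some x⟩ : DR)}) ×ˢ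
              (univ : Set (ℕ → DR))),
            isOpen_univ.prod (((isOpen_discrete _).preimage (continuous_apply n)).prod
              isOpen_univ), ?_⟩
        ext y
        have hy := Set.ext_iff.1 (fDR_preimage_singleton hn) y
        simp only [mem_preimage, mem_singleton_iff] at hy
        simp only [hψ, mem_preimage, mem_prod, mem_univ, true_and, and_true,
          mem_singleton_iff]
        exact hy
      · have hxr : x ∈ range u := by
          rw [← hu]; exact mem_insert_of_mem _ (mem_union_left _ hx3)
        obtain ⟨k, hk⟩ := hxr
        subst hk
        refine isOpen_induced_iff.mpr
          ⟨Ioo (u k - 1) (u k + ε) ×ˢ ((univ : Set (ℕ → DR)) ×ˢ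
              ((fun v : ℕ → DR => v k) ⁻¹' {(⟨some 0⟩ : DR)})),
            isOpen_Ioo.prod (isOpen_univ.prod ((isOpen_discrete _).preimage
              (continuous_apply k))), ?_⟩
        have h3' : u k ∈ A₃ := hx3
        ext y
        have hy := Set.ext_iff.1 (gDR_Ici (A₄ := A₄) h3') y
        simp only [mem_preimage, mem_singleton_iff, mem_Ici] at hy
        simp only [hψ, mem_preimage, mem_prod, mem_univ, true_and, mem_singleton_iff,
          mem_Ioo, mem_Ico, hy]
        constructor
        · rintro ⟨⟨_, h2⟩, h3⟩; exact ⟨h3, h2⟩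
        · rintro ⟨h1, h2⟩; exact ⟨⟨by linarith, h2⟩, h1⟩
      · have hxr : x ∈ range u := by
          rw [← hu]; exact mem_insert_of_mem _ (mem_union_right _ hx4)
        obtain ⟨k, hk⟩ := hxr
        subst hk
        refine isOpen_induced_iff.mpr
          ⟨Ioo (u k - ε) (u k + 1) ×ˢ ((univ : Set (ℕ → DR)) ×ˢ
              ((fun v : ℕ → DR => v k) ⁻¹' {(⟨none⟩ : DR)})),
            isOpen_Ioo.prod (isOpen_univ.prod ((isOpen_discrete _).preimage
              (continuous_apply k))), ?_⟩
        have h4' : u k ∈ A₄ := hx4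
        have h3' : u k ∉ A₃ := fun h => (Set.disjoint_left.1 d34) h h4'
        ext y
        have hy := Set.ext_iff.1 (gDR_Iic h4' h3') y
        simp only [mem_preimage, mem_singleton_iff, mem_Iic] at hy
        simp only [hψ, mem_preimage, mem_prod, mem_univ, true_and, mem_singleton_iff,
          mem_Ioo, mem_Ioc, hy]
        constructor
        · rintro ⟨⟨h1, _⟩, h3⟩; exact ⟨h1, h3⟩
        · rintro ⟨h1, h3⟩; exact ⟨⟨h1, by linarith⟩, h3⟩
  refine ⟨MetricSpace.induced ψ hinj m, ?_⟩
  rw [show (MetricSpace.induced ψ hinj m).toUniformSpace.toTopologicalSpace =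
      TopologicalSpace.induced ψ m.toUniformSpace.toTopologicalSpace from
      UniformSpace.toTopologicalSpace_comap, hm, ← key]
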